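/- For all integers n, k, i, j with 1 ≤ k ≤ n: summing the count c(n,n−j) · S(n−j,k) · c(k,k−i) of ordered partitions of [n] into k nonempty lists with nsb = i and nse = j over all 0 ≤ i ≤ k−1 and 0 ≤ j ≤ n−k yields ∑_{j=0}^{n−k} ∑_{i=0}^{k−1} c(n,n−j) · S(n−j,k) · c(k,k−i) = n! · C(n−1,k−1). -/

import Mathlib

open Finset

/-- The number of cycles (including fixed points) of a permutation of `Fin n`. -/
noncomputable def cycleCount {n : ℕ} (σ : Equiv.Perm (Fin n)) : ℕ :=
  σ.cycleType.card + (Finset.univ.filter fun x => σ x = x).card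

/-- The unsigned Stirling number of the first kind `c(n,k)`: the number of
permutations of an `n`-element set with exactly `k` cycles. -/
noncomputable def stirlingFirst (n k : ℕ) : ℕ :=
  Set.ncard {σ : Equiv.Perm (Fin n) | cycleCount σ = k}

/-- The signed Stirling number of the first kind `s(n,k) = (-1)^(n-k) c(n,k)`. -/
noncomputable def stirlingFirstSigned (n k : ℕ) : ℤ :=
  (-1) ^ (n - k) * (stirlingFirst n k : ℤ)

/-- `P` is an (unordered) partition of `Fin n` into nonempty blocks. -/
def IsPartitionOf (n : ℕ) (P : Finset (Finset (Fin n))) : Prop :=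
  (∀ b ∈ P, b.Nonempty) ∧ (∀ b ∈ P, ∀ c ∈ P, b ≠ c → Disjoint b c) ∧
    ∀ x : Fin n, ∃ b ∈ P, x ∈ b

/-- The Stirling number of the second kind `S(n,k)`: the number of partitions of an
`n`-element set into exactly `k` nonempty blocks. -/
noncomputable def stirlingSecond (n k : ℕ) : ℕ :=
  Set.ncard {P : Finset (Finset (Fin n)) | IsPartitionOf n P ∧ P.card = k}

/-- The Bell number `B n`: the number of partitions of an `n`-element set into
nonempty blocks. -/
noncomputable def bell (n : ℕ) : ℕ :=
  Set.ncard {P : Finset (Finset (Fin n)) | IsPartitionOf n P}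

/-- The statistic `nse` of a list: the number of positions `j` such that some later
entry is smaller than the entry at position `j`. -/
def nseList {α : Type*} [LinearOrder α] : List α → ℕ
  | [] => 0
  | a :: w => (if ∃ b ∈ w, b < a then 1 else 0) + nseList w

/-- `B` is an ordered set partition ("list of sets") of `Fin n` into `k` pairwise
disjoint nonempty blocks. -/
def IsOrderedSetPartition (n k : ℕ) (B : Fin k → Finset (Fin n)) : Prop :=
  (∀ j, (B j).Nonempty) ∧ (∀ j l, j ≠ l → Disjoint (B j) (B l)) ∧
    ∀ x : Fin n, ∃ j, x ∈ B j

/-- The statistic `nsb` of an ordered set partition: the number of indices `j`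
such that `min (B j) > min (B l)` for some `l > j`. -/
def nsbOSP {n k : ℕ} (B : Fin k → Finset (Fin n)) : ℕ :=
  (Finset.univ.filter fun j : Fin k => ∃ l, j < l ∧ (B l).min < (B j).min).card

/-- `P` is a "set of lists" partition of `Fin n`: an unordered collection of nonempty
sequences of distinct elements, with pairwise disjoint underlying sets covering `Fin n`. -/
def IsSetOfLists (n : ℕ) (P : Finset (List (Fin n))) : Prop :=
  (∀ w ∈ P, w ≠ []) ∧ (∀ w ∈ P, w.Nodup) ∧
    (∀ w ∈ P, ∀ u ∈ P, w ≠ u → ∀ x ∈ w, x ∉ u) ∧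
    ∀ x : Fin n, ∃ w ∈ P, x ∈ w

/-- The statistic `nse` of a set of lists: the sum of `nseList` over its blocks. -/
def nseSL {n : ℕ} (P : Finset (List (Fin n))) : ℕ := ∑ w ∈ P, nseList w

/-- `L` is a "list of lists" partition of `Fin n` into `k` blocks: a sequence of `k`
nonempty sequences of distinct elements, with pairwise disjoint underlying sets
covering `Fin n`. -/
def IsListOfLists (n k : ℕ) (L : Fin k → List (Fin n)) : Prop :=
  (∀ j, L j ≠ []) ∧ (∀ j, (L j).Nodup) ∧
    (∀ j l, j ≠ l → ∀ x ∈ L j, x ∉ L l) ∧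
    ∀ x : Fin n, ∃ j, x ∈ L j

/-- The statistic `nse` of a list of lists: the sum of `nseList` over its blocks. -/
def nseLL {n k : ℕ} (L : Fin k → List (Fin n)) : ℕ := ∑ j, nseList (L j)

/-- The statistic `nsb` of a list of lists: the number of indices `j` such that
`min (L j) > min (L l)` for some `l > j`. -/
def nsbLL {n k : ℕ} (L : Fin k → List (Fin n)) : ℕ :=
  (Finset.univ.filter fun j : Fin k => ∃ l, j < l ∧ (L l).minimum < (L j).minimum).card

section AuxStirling

open Equiv

lemma ncard_setOf {α : Type*} [Fintype α] (p : α → Prop) [DecidablePred p] :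
    Set.ncard {x | p x} = (Finset.univ.filter p).card := by
  rw [← Set.ncard_coe_finset]; congr 1; ext x; simp

/-! ### Basic facts about `cycleCount` and `stirlingFirst` -/

lemma cycleCount_le {n : ℕ} (σ : Equiv.Perm (Fin n)) : cycleCount σ ≤ n := by
  have h1 : σ.cycleType.card ≤ σ.support.card := by
    have := Multiset.card_nsmul_le_sum (s := σ.cycleType) (a := 1)
      (fun x hx => Equiv.Perm.one_lt_of_mem_cycleType hx |>.le)
    simpa [Equiv.Perm.sum_cycleType] using this
  have h2 : (Finset.univ.filter fun x => σ x = x).card = n - σ.support.card := by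
    have : (Finset.univ.filter fun x => σ x = x) = σ.supportᶜ := by
      ext x; simp [Equiv.Perm.mem_support]
    rw [this, Finset.card_compl, Fintype.card_fin]
  have h3 : σ.support.card ≤ n := by
    simpa using Finset.card_le_card (Finset.subset_univ σ.support)
  unfold cycleCount
  omega

lemma one_le_cycleCount {n : ℕ} (hn : 1 ≤ n) (σ : Equiv.Perm (Fin n)) : 1 ≤ cycleCount σ := by
  unfold cycleCount
  by_cases h : σ = 1
  · subst h
    have : (Finset.univ.filter fun x : Fin n => (1 : Equiv.Perm (Fin n)) x = x) = Finset.univ := by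
      ext x; simp
    rw [this]
    simp [Fintype.card_fin]; omega
  · have := Equiv.Perm.card_cycleType_pos.mpr h
    omega

lemma stirlingFirst_eq_card (n m : ℕ) :
    stirlingFirst n m = (Finset.univ.filter fun σ : Equiv.Perm (Fin n) => cycleCount σ = m).card := by
  classical
  rw [stirlingFirst, ncard_setOf]

lemma sum_cycleCount {n : ℕ} (g : ℕ → ℕ) :
    ∑ m ∈ Finset.range (n+1), stirlingFirst n m * g m
      = ∑ σ : Equiv.Perm (Fin n), g (cycleCount σ) := by
  classical
  rw [← Finset.sum_fiberwise_of_maps_to (g := fun σ : Equiv.Perm (Fin n) => cycleCount σ)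
      (fun σ _ => Finset.mem_range.mpr (Nat.lt_succ_of_le (cycleCount_le σ)))]
  refine Finset.sum_congr rfl fun m _ => ?_
  rw [stirlingFirst_eq_card]
  rw [Finset.sum_congr rfl (fun σ hσ => by
    rw [(Finset.mem_filter.mp hσ).2]), Finset.sum_const, smul_eq_mul]

lemma sum_stirlingFirst {k : ℕ} (hk : 1 ≤ k) :
    ∑ i ∈ Finset.range k, stirlingFirst k (k - i) = Nat.factorial k := by
  classical
  have h0 : stirlingFirst k 0 = 0 := by
    rw [stirlingFirst_eq_card]
    rw [Finset.card_eq_zero]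
    rw [Finset.filter_eq_empty_iff]
    intro σ _
    exact fun h => by have := one_le_cycleCount hk σ; omega
  have htot : ∑ m ∈ Finset.range (k+1), stirlingFirst k m = Nat.factorial k := by
    have := sum_cycleCount (n := k) (g := fun _ => 1)
    simpa [Finset.card_univ, Fintype.card_perm, Fintype.card_fin] using this
  have hre : ∑ i ∈ Finset.range k, stirlingFirst k (k - i)
      = ∑ m ∈ Finset.range k, stirlingFirst k (m + 1) := by
    rw [← Finset.sum_range_reflect]
    refine Finset.sum_congr rfl fun i hi => ?_
    congr 1
    have := Finset.mem_range.mp hi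
    omega
  rw [hre]
  have := Finset.sum_range_succ' (fun m => stirlingFirst k m) k
  rw [this, h0, add_zero] at htot
  exact htot

/-! ### Counting surjections: `k! * S(m,k)` -/

section ClaimA
variable {m k : ℕ}

def fib {m k : ℕ} (f : Fin m → Fin k) (j : Fin k) : Finset (Fin m) :=
  Finset.univ.filter fun x => f x = j

lemma mem_fib {m k : ℕ} {f : Fin m → Fin k} {j : Fin k} {x : Fin m} :
    x ∈ fib f j ↔ f x = j := by simp [fib]

def PQ (f : Fin m → Fin k) : Finset (Finset (Fin m)) :=
  Finset.univ.image fun j => fib f j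

lemma fib_nonempty {m k : ℕ} {f : Fin m → Fin k} (hs : Function.Surjective f) (j : Fin k) :
    (fib f j).Nonempty := by
  obtain ⟨x, hx⟩ := hs j
  exact ⟨x, mem_fib.mpr hx⟩

lemma PQ_partition {f : Fin m → Fin k} (hs : Function.Surjective f) :
    IsPartitionOf m (PQ f) ∧ (PQ f).card = k := by
  have hinj : Function.Injective (fib f) := by
    intro j j' h
    obtain ⟨x, hx⟩ := fib_nonempty hs j
    have hx' : x ∈ fib f j' := by rw [← h]; exact hx
    rw [← mem_fib.mp hx, mem_fib.mp hx']
  refine ⟨⟨?_, ?_, ?_⟩, ?_⟩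
  · rintro b hb
    obtain ⟨j, _, rfl⟩ := Finset.mem_image.mp hb
    exact fib_nonempty hs j
  · rintro b hb c hc hbc
    obtain ⟨j, _, rfl⟩ := Finset.mem_image.mp hb
    obtain ⟨j', _, rfl⟩ := Finset.mem_image.mp hc
    rw [Finset.disjoint_left]
    intro x hx hx'
    exact hbc (by rw [← mem_fib.mp hx, ← mem_fib.mp hx'])
  · intro x
    exact ⟨fib f (f x), Finset.mem_image.mpr ⟨f x, Finset.mem_univ _, rfl⟩, mem_fib.mpr rfl⟩
  · rw [PQ, Finset.card_image_of_injective _ hinj, Finset.card_univ, Fintype.card_fin]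

variable (P : Finset (Finset (Fin m))) (hP : IsPartitionOf m P ∧ P.card = k)
include hP

lemma exists_unique_blk (x : Fin m) : ∃! b, b ∈ P ∧ x ∈ b := by
  obtain ⟨b, hb, hxb⟩ := hP.1.2.2 x
  refine ⟨b, ⟨hb, hxb⟩, ?_⟩
  rintro c ⟨hc, hxc⟩
  by_contra hne
  exact (Finset.disjoint_left.mp (hP.1.2.1 c hc b hb hne)) hxc hxb

noncomputable def blk (x : Fin m) : Finset (Fin m) :=
  P.choose (fun b => x ∈ b) (exists_unique_blk P hP x)

lemma blk_mem (x : Fin m) : blk P hP x ∈ P := by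
  unfold blk; exact P.choose_mem (fun b => x ∈ b) (exists_unique_blk P hP x)

lemma mem_blk (x : Fin m) : x ∈ blk P hP x := by
  unfold blk; exact P.choose_property (fun b => x ∈ b) (exists_unique_blk P hP x)

lemma blk_eq {x : Fin m} {b : Finset (Fin m)} (hb : b ∈ P) (hx : x ∈ b) :
    blk P hP x = b :=
  (exists_unique_blk P hP x).unique ⟨blk_mem P hP x, mem_blk P hP x⟩ ⟨hb, hx⟩

noncomputable def fiberEquiv :
    {f : Fin m → Fin k // Function.Surjective f ∧ PQ f = P} ≃ ({b // b ∈ P} ≃ Fin k) where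
  toFun := fun ⟨f, _, hPQ⟩ =>
    Equiv.ofBijective (fun b => f (b.1.min' (hP.1.1 b.1 b.2))) (by
      have key : ∀ b : {b // b ∈ P}, b.1 = fib f (f (b.1.min' (hP.1.1 b.1 b.2))) := by
        rintro ⟨b, hb⟩
        rw [← hPQ] at hb
        obtain ⟨j, _, rfl⟩ := Finset.mem_image.mp hb
        simp only
        congr 1
        exact (mem_fib.mp (Finset.min'_mem _ _)).symm
      constructor
      · intro b₁ b₂ h
        apply Subtype.ext
        rw [key b₁, key b₂]
        exact congrArg _ h
      · intro j
        have hmem : fib f j ∈ P := by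
          rw [← hPQ]; exact Finset.mem_image.mpr ⟨j, Finset.mem_univ _, rfl⟩
        exact ⟨⟨fib f j, hmem⟩, mem_fib.mp (Finset.min'_mem _ _)⟩)
  invFun := fun φ => ⟨fun x => φ ⟨blk P hP x, blk_mem P hP x⟩, by
    have hfib : ∀ j, fib (fun x => φ ⟨blk P hP x, blk_mem P hP x⟩) j = (φ.symm j).1 := by
      intro j
      ext x
      rw [mem_fib]
      constructor
      · intro h
        have : (⟨blk P hP x, blk_mem P hP x⟩ : {b // b ∈ P}) = φ.symm j := by
          rw [Equiv.eq_symm_apply, h]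
        have := congrArg Subtype.val this
        simp only at this
        rw [← this]
        exact mem_blk P hP x
      · intro hx
        have : blk P hP x = (φ.symm j).1 := blk_eq P hP (φ.symm j).2 hx
        have h2 : (⟨blk P hP x, blk_mem P hP x⟩ : {b // b ∈ P}) = φ.symm j :=
          Subtype.ext this
        rw [h2, Equiv.apply_symm_apply]
    constructor
    · intro j
      refine ⟨((φ.symm j).1).min' (hP.1.1 _ (φ.symm j).2), ?_⟩
      have h1 : blk P hP (((φ.symm j).1).min' (hP.1.1 _ (φ.symm j).2)) = (φ.symm j).1 :=
        blk_eq P hP (φ.symm j).2 (Finset.min'_mem _ _)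
      have h2 : (⟨blk P hP (((φ.symm j).1).min' (hP.1.1 _ (φ.symm j).2)), blk_mem P hP _⟩ :
          {b // b ∈ P}) = φ.symm j := Subtype.ext h1
      simp only [h2, Equiv.apply_symm_apply]
    · rw [PQ]
      ext b
      rw [Finset.mem_image]
      constructor
      · rintro ⟨j, _, rfl⟩
        rw [hfib j]
        exact (φ.symm j).2
      · intro hb
        refine ⟨φ ⟨b, hb⟩, Finset.mem_univ _, ?_⟩
        rw [hfib, Equiv.symm_apply_apply]⟩
  left_inv := by
    rintro ⟨f, hs, hPQ⟩
    apply Subtype.ext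
    funext x
    show f ((blk P hP x).min' _) = f x
    have hmem : fib f (f x) ∈ P := by
      rw [← hPQ]; exact Finset.mem_image.mpr ⟨f x, Finset.mem_univ _, rfl⟩
    have hblk : blk P hP x = fib f (f x) := blk_eq P hP hmem (mem_fib.mpr rfl)
    have : (blk P hP x).min' (hP.1.1 _ (blk_mem P hP x)) ∈ fib f (f x) := by
      rw [← hblk]
      exact Finset.min'_mem _ _
    exact mem_fib.mp this
  right_inv := by
    intro φ
    apply Equiv.ext
    intro b
    show φ ⟨blk P hP (b.1.min' _), _⟩ = φ b
    congr 1
    exact Subtype.ext (blk_eq P hP b.2 (Finset.min'_mem _ _))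

omit hP in
lemma surjCard_eq (m k : ℕ) :
    Nat.card {f : Fin m → Fin k // Function.Surjective f}
      = stirlingSecond m k * Nat.factorial k := by
  classical
  have hS : stirlingSecond m k
      = (Finset.univ.filter fun P : Finset (Finset (Fin m)) =>
          IsPartitionOf m P ∧ P.card = k).card := by
    rw [stirlingSecond, ncard_setOf]
  have hN : Nat.card {f : Fin m → Fin k // Function.Surjective f}
      = (Finset.univ.filter fun f : Fin m → Fin k => Function.Surjective f).card := by
    rw [Nat.card_eq_fintype_card, Fintype.card_subtype]
  rw [hN, hS]
  rw [Finset.card_eq_sum_card_fiberwise (f := PQ)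
    (t := Finset.univ.filter fun P : Finset (Finset (Fin m)) => IsPartitionOf m P ∧ P.card = k)
    (fun f hf => by
      rw [Finset.mem_coe, Finset.mem_filter]
      exact ⟨Finset.mem_univ _, PQ_partition (Finset.mem_filter.mp (Finset.mem_coe.mp hf)).2⟩)]
  rw [Finset.sum_congr rfl (fun P hPmem => ?_), Finset.sum_const, smul_eq_mul]
  have hP := (Finset.mem_filter.mp hPmem).2
  have hcard : (Finset.filter (fun f => PQ f = P)
      (Finset.filter (fun f : Fin m → Fin k => Function.Surjective f) Finset.univ)).card
      = Nat.card {f : Fin m → Fin k // Function.Surjective f ∧ PQ f = P} := by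
    rw [Nat.card_eq_fintype_card, Fintype.card_subtype, Finset.filter_filter]
  rw [hcard, Nat.card_congr (fiberEquiv P hP), Nat.card_eq_fintype_card, Fintype.card_equiv
    (Fintype.equivFinOfCardEq (by rw [Fintype.card_coe, hP.2]))]
  rw [Fintype.card_coe, hP.2]

end ClaimA

/-! ### Surjections compatible with a permutation -/

section ClaimB
variable {n k : ℕ}

def sameCycleSetoid (σ : Equiv.Perm (Fin n)) : Setoid (Fin n) :=
  ⟨σ.SameCycle, ⟨fun _ => Equiv.Perm.SameCycle.refl σ _, fun h => h.symm, fun h1 h2 => h1.trans h2⟩⟩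

open Equiv.Perm in
noncomputable def Fmap (σ : Equiv.Perm (Fin n)) (x : Fin n) :
    ({c // c ∈ σ.cycleFactorsFinset} ⊕ {x : Fin n // σ x = x}) := by
  classical
  exact if h : σ x = x then Sum.inr ⟨x, h⟩
    else Sum.inl ⟨σ.cycleOf x, cycleOf_mem_cycleFactorsFinset_iff.mpr (mem_support.mpr h)⟩

open Equiv.Perm in
lemma Fmap_wd (σ : Equiv.Perm (Fin n)) :
    ∀ x y, σ.SameCycle x y → Fmap σ x = Fmap σ y := by
  intro x y hxy
  by_cases hx : σ x = x
  · have hyx : y = x := by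
      obtain ⟨i, hi⟩ := hxy
      rw [← hi, zpow_apply_eq_self_of_apply_eq_self hx]
    subst hyx; rfl
  · have hy : ¬ σ y = y := by
      intro hy
      obtain ⟨i, hi⟩ := hxy.symm
      rw [← hi, zpow_apply_eq_self_of_apply_eq_self hy] at hx
      exact hx hy
    simp only [Fmap, dif_neg hx, dif_neg hy]
    exact congrArg _ (Subtype.ext (hxy.cycleOf_eq))

open Equiv.Perm in
noncomputable def orbitEquiv (σ : Equiv.Perm (Fin n)) :
    Quotient (sameCycleSetoid σ) ≃
      ({c // c ∈ σ.cycleFactorsFinset} ⊕ {x : Fin n // σ x = x}) := by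
  classical
  refine Equiv.ofBijective (Quotient.lift (Fmap σ) (Fmap_wd σ)) ⟨?_, ?_⟩
  · rintro ⟨x⟩ ⟨y⟩ h
    replace h : Fmap σ x = Fmap σ y := h
    apply Quotient.sound
    show σ.SameCycle x y
    by_cases hx : σ x = x <;> by_cases hy : σ y = y
    · simp only [Fmap, dif_pos hx, dif_pos hy] at h
      obtain rfl : x = y := congrArg Subtype.val (Sum.inr.inj h)
      exact Equiv.Perm.SameCycle.refl σ x
    · simp only [Fmap, dif_pos hx, dif_neg hy] at h
      exact absurd h (by simp)
    · simp only [Fmap, dif_neg hx, dif_pos hy] at h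
      exact absurd h (by simp)
    · simp only [Fmap, dif_neg hx, dif_neg hy] at h
      have hco : σ.cycleOf x = σ.cycleOf y := congrArg Subtype.val (Sum.inl.inj h)
      have hy' : y ∈ (σ.cycleOf x).support := by
        rw [hco]
        exact mem_support_cycleOf_iff.mpr ⟨Equiv.Perm.SameCycle.refl σ y, mem_support.mpr hy⟩
      exact (mem_support_cycleOf_iff.mp hy').1
  · rintro (⟨c, hc⟩ | ⟨x, hx⟩)
    · obtain ⟨x, hcx, -⟩ := (mem_cycleFactorsFinset_iff.mp hc).1
      have hxc : x ∈ c.support := mem_support.mpr hcx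
      have hσx : ¬ σ x = x := by
        rw [← (mem_cycleFactorsFinset_iff.mp hc).2 x hxc]
        exact hcx
      refine ⟨Quotient.mk _ x, ?_⟩
      show Fmap σ x = _
      simp only [Fmap, dif_neg hσx]
      exact congrArg _ (Subtype.ext (cycle_is_cycleOf hxc hc).symm)
    · refine ⟨Quotient.mk _ x, ?_⟩
      show Fmap σ x = _
      simp only [Fmap, dif_pos hx]

lemma card_orbit (σ : Equiv.Perm (Fin n)) :
    Nat.card (Quotient (sameCycleSetoid σ)) = cycleCount σ := by
  classical
  rw [Nat.card_congr (orbitEquiv σ), Nat.card_sum, cycleCount]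
  congr 1
  · rw [Nat.card_eq_fintype_card, Fintype.card_coe, Equiv.Perm.cycleType_def,
      Multiset.card_map]
    rfl
  · rw [Nat.card_eq_fintype_card, Fintype.card_subtype]

noncomputable def compatEquiv (σ : Equiv.Perm (Fin n)) :
    {f : Fin n → Fin k // Function.Surjective f ∧ ∀ x, f (σ x) = f x} ≃
      {g : Quotient (sameCycleSetoid σ) → Fin k // Function.Surjective g} where
  toFun := fun ⟨f, hs, hi⟩ => ⟨Quotient.lift f (by
      have gen : ∀ (τ : Equiv.Perm (Fin n)), (∀ x, f (τ x) = f x) →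
          ∀ (j : ℕ) (x : Fin n), f ((τ ^ j) x) = f x := by
        intro τ hτ j
        induction j with
        | zero => simp
        | succ j ih =>
          intro x
          rw [pow_succ', Equiv.Perm.mul_apply, hτ, ih]
      have hinv : ∀ x, f (σ⁻¹ x) = f x := by
        intro x
        conv_rhs => rw [← (by simp : σ (σ⁻¹ x) = x), hi]
      intro x y (hxy : σ.SameCycle x y)
      obtain ⟨i, hi'⟩ := hxy
      rw [← hi']
      rcases i with j | j
      · rw [Int.ofNat_eq_coe, zpow_natCast]
        exact (gen σ hi j x).symm
      · rw [Int.negSucc_eq, ← Nat.cast_succ, zpow_neg, ← inv_zpow, zpow_natCast]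
        exact (gen σ⁻¹ hinv (j+1) x).symm), by
    intro j
    obtain ⟨x, hx⟩ := hs j
    exact ⟨Quotient.mk _ x, hx⟩⟩
  invFun := fun ⟨g, hgs⟩ => ⟨g ∘ Quotient.mk _, by
    constructor
    · intro j
      obtain ⟨q, hq⟩ := hgs j
      obtain ⟨x, rfl⟩ := Quotient.exists_rep q
      exact ⟨x, hq⟩
    · intro x
      show g (Quotient.mk _ (σ x)) = g (Quotient.mk _ x)
      have hsc : σ.SameCycle x (σ x) := ⟨1, by simp⟩
      exact congrArg g (Quotient.sound (show σ.SameCycle (σ x) x from hsc.symm))⟩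
  left_inv := by rintro ⟨f, hs, hi⟩; rfl
  right_inv := by
    rintro ⟨g, hgs⟩
    apply Subtype.ext
    funext q
    obtain ⟨x, rfl⟩ := Quotient.exists_rep q
    rfl

lemma compat_card (σ : Equiv.Perm (Fin n)) :
    Nat.card {f : Fin n → Fin k // Function.Surjective f ∧ ∀ x, f (σ x) = f x}
      = Nat.card {f : Fin (cycleCount σ) → Fin k // Function.Surjective f} := by
  classical
  rw [Nat.card_congr (compatEquiv σ)]
  have e : Quotient (sameCycleSetoid σ) ≃ Fin (cycleCount σ) :=
    Finite.equivFinOfCardEq (card_orbit σ)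
  refine Nat.card_congr (Equiv.subtypeEquiv (Equiv.arrowCongr e (Equiv.refl (Fin k))) ?_)
  intro g
  constructor
  · intro hg j
    obtain ⟨q, hq⟩ := hg j
    exact ⟨e q, by simpa [Equiv.arrowCongr] using hq⟩
  · intro hg j
    obtain ⟨a, ha⟩ := hg j
    exact ⟨e.symm a, by simpa [Equiv.arrowCongr] using ha⟩

end ClaimB

/-! ### Pairs (permutation, compatible surjection) -/

section ClaimD
variable {n k : ℕ}

def CompT (n k : ℕ) : Type :=
  {a : Fin k → ℕ // (∀ j, 0 < a j) ∧ ∑ j, a j = n}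

noncomputable def Ea (a : Fin k → ℕ) (h : ∑ j, a j = n) : (Σ j, Fin (a j)) ≃ Fin n :=
  Fintype.equivOfCardEq (by simp [h])

def afun (f : Fin n → Fin k) : Fin k → ℕ := fun j => (fib f j).card

lemma sum_afun (f : Fin n → Fin k) : ∑ j, afun f j = n := by
  classical
  have := Finset.card_eq_sum_card_fiberwise
    (s := Finset.univ) (t := Finset.univ) (f := f) (fun x _ => Finset.mem_univ (f x))
  simp only [Finset.card_univ, Fintype.card_fin] at this
  simpa [afun, fib] using this.symm

noncomputable def mEquiv (f : Fin n → Fin k) : (Σ j, Fin (afun f j)) ≃ Fin n :=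
  (Equiv.sigmaCongrRight fun j =>
    (((fib f j).orderIsoOfFin rfl).toEquiv.trans
      (Equiv.subtypeEquivRight (fun _ => mem_fib)))).trans (Equiv.sigmaFiberEquiv f)

lemma f_mEquiv (f : Fin n → Fin k) (j : Fin k) (p : Fin (afun f j)) :
    f (mEquiv f ⟨j, p⟩) = j := by
  have : mEquiv f ⟨j, p⟩ = ((fib f j).orderIsoOfFin rfl p : {x // x ∈ fib f j}).1 := rfl
  rw [this]
  exact mem_fib.mp ((fib f j).orderIsoOfFin rfl p).2

lemma fst_mEquiv_symm (f : Fin n → Fin k) (x : Fin n) :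
    ((mEquiv f).symm x).1 = f x := by
  rcases h : (mEquiv f).symm x with ⟨j, p⟩
  have hx : x = mEquiv f ⟨j, p⟩ := by rw [← h, Equiv.apply_symm_apply]
  rw [hx]
  exact (f_mEquiv f j p).symm

noncomputable def sigmaOf (f : Fin n → Fin k) (w : Equiv.Perm (Fin n)) : Equiv.Perm (Fin n) :=
  (mEquiv f).symm.trans ((Ea (afun f) (sum_afun f)).trans w)

noncomputable def wOf (f : Fin n → Fin k) (σ : Equiv.Perm (Fin n)) : Equiv.Perm (Fin n) :=
  (Ea (afun f) (sum_afun f)).symm.trans ((mEquiv f).trans σ)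

noncomputable def fOf (a : Fin k → ℕ) (h : ∑ j, a j = n) (w : Equiv.Perm (Fin n)) :
    Fin n → Fin k := fun x => ((Ea a h).symm (w.symm x)).1

lemma wOf_sigmaOf (f : Fin n → Fin k) (w : Equiv.Perm (Fin n)) :
    wOf f (sigmaOf f w) = w := by
  ext x; simp [wOf, sigmaOf]

lemma sigmaOf_wOf (f : Fin n → Fin k) (σ : Equiv.Perm (Fin n)) :
    sigmaOf f (wOf f σ) = σ := by
  ext x; simp [wOf, sigmaOf]

def sigmaFst {β : Fin k → Type*} (j : Fin k) : {s : Σ j', β j' // s.1 = j} ≃ β j where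
  toFun := fun s => s.2 ▸ s.1.2
  invFun := fun b => ⟨⟨j, b⟩, rfl⟩
  left_inv := by rintro ⟨⟨j', b⟩, rfl⟩; rfl
  right_inv := fun b => rfl

lemma afun_fOf (a : Fin k → ℕ) (h : ∑ j, a j = n) (w : Equiv.Perm (Fin n)) :
    afun (fOf a h w) = a := by
  classical
  funext j
  show (fib (fOf a h w) j).card = a j
  rw [fib, ← Fintype.card_subtype]
  have e' : {x : Fin n // fOf a h w x = j} ≃ Fin (a j) :=
    (Equiv.subtypeEquiv ((Ea a h).trans w).symm (fun x => Iff.rfl)).trans (sigmaFst j)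
  rw [Fintype.card_congr e', Fintype.card_fin]

lemma Ea_cast (a a' : Fin k → ℕ) (h : ∑ j, a j = n) (h' : ∑ j, a' j = n)
    (haa : a' = a) (y : Σ j, Fin (a' j)) :
    ((Ea a h).symm (Ea a' h' y)).1 = y.1 := by
  subst haa
  exact congrArg Sigma.fst (Equiv.symm_apply_apply _ y)

lemma fOf_surjective (a : Fin k → ℕ) (h : ∑ j, a j = n) (hpos : ∀ j, 0 < a j)
    (w : Equiv.Perm (Fin n)) : Function.Surjective (fOf a h w) := by
  intro j
  refine ⟨w ((Ea a h) ⟨j, ⟨0, hpos j⟩⟩), ?_⟩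
  simp [fOf]

lemma fOf_invariant (a : Fin k → ℕ) (h : ∑ j, a j = n) (w : Equiv.Perm (Fin n)) (x : Fin n) :
    fOf a h w (sigmaOf (fOf a h w) w x) = fOf a h w x := by
  show ((Ea a h).symm (w.symm ((sigmaOf (fOf a h w) w) x))).1 = fOf a h w x
  have hstep : (sigmaOf (fOf a h w) w) x
      = w ((Ea (afun (fOf a h w)) (sum_afun _)) ((mEquiv (fOf a h w)).symm x)) := rfl
  rw [hstep, Equiv.symm_apply_apply,
    Ea_cast a (afun (fOf a h w)) h (sum_afun _) (afun_fOf a h w), fst_mEquiv_symm]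

lemma fOf_wOf (f : Fin n → Fin k) (σ : Equiv.Perm (Fin n)) (hi : ∀ x, f (σ x) = f x) :
    fOf (afun f) (sum_afun f) (wOf f σ) = f := by
  funext x
  show ((Ea (afun f) (sum_afun f)).symm ((wOf f σ).symm x)).1 = f x
  have hstep : (wOf f σ).symm x
      = (Ea (afun f) (sum_afun f)) ((mEquiv f).symm (σ.symm x)) := rfl
  rw [hstep, Equiv.symm_apply_apply, fst_mEquiv_symm]
  have := hi (σ.symm x)
  rw [Equiv.apply_symm_apply] at this
  exact this.symm

noncomputable def TsetEquiv (n k : ℕ) :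
    {p : Equiv.Perm (Fin n) × (Fin n → Fin k) //
      Function.Surjective p.2 ∧ ∀ x, p.2 (p.1 x) = p.2 x} ≃
    (Equiv.Perm (Fin n) × CompT n k) where
  toFun := fun ⟨(σ, f), hs, _⟩ =>
    (wOf f σ, ⟨afun f, fun j => Finset.card_pos.mpr (fib_nonempty hs j), sum_afun f⟩)
  invFun := fun (w, ⟨a, hpos, hsum⟩) =>
    ⟨(sigmaOf (fOf a hsum w) w, fOf a hsum w),
      fOf_surjective a hsum hpos w, fOf_invariant a hsum w⟩
  left_inv := by
    rintro ⟨⟨σ, f⟩, hs, hi⟩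
    apply Subtype.ext
    have hf := fOf_wOf f σ hi
    simp only [hf]
    rw [Prod.mk.injEq]
    exact ⟨sigmaOf_wOf f σ, rfl⟩
  right_inv := by
    rintro ⟨w, a, hpos, hsum⟩
    dsimp only
    refine Prod.ext ?_ ?_
    · exact wOf_sigmaOf _ w
    · exact Subtype.ext (afun_fOf a hsum w)

end ClaimD

/-! ### Counting compositions -/

noncomputable def sumFinEquivSym (k m : ℕ) :
    Sym (Fin k) m ≃ {b : Fin k → ℕ // ∑ j, b j = m} := by
  refine Equiv.subtypeEquiv (Multiset.toFinsupp.toEquiv.trans Finsupp.equivFunOnFinite) ?_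
  intro s
  have hcard : ∑ j, s.count j = Multiset.card s := by
    rw [← Multiset.toFinset_sum_count_eq s]
    refine (Finset.sum_subset (Finset.subset_univ _) ?_).symm
    intro x _ hx
    rw [Multiset.count_eq_zero]
    intro hmem
    exact hx (Multiset.mem_toFinset.mpr hmem)
  show Multiset.card s = m ↔ ∑ j, s.count j = m
  rw [hcard]

lemma card_CompT {n k : ℕ} (hk : 1 ≤ k) (hkn : k ≤ n) :
    Nat.card (CompT n k) = Nat.choose (n - 1) (k - 1) := by
  classical
  have e1 : CompT n k ≃ {b : Fin k → ℕ // ∑ j, b j = n - k} := by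
    refine ⟨fun a => ⟨fun j => a.1 j - 1, ?_⟩, fun b => ⟨fun j => b.1 j + 1, ?_, ?_⟩, ?_, ?_⟩
    · obtain ⟨a, hpos, hsum⟩ := a
      show ∑ j, (a j - 1) = n - k
      have h0 : ∑ j, (a j - 1 + 1) = ∑ j, a j :=
        Finset.sum_congr rfl (fun j _ => by have := hpos j; omega)
      rw [Finset.sum_add_distrib, Finset.sum_const, Finset.card_univ, Fintype.card_fin,
        smul_eq_mul, mul_one, hsum] at h0
      omega
    · exact fun j => Nat.succ_pos _
    · rw [Finset.sum_add_distrib, Finset.sum_const, Finset.card_univ, Fintype.card_fin,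
        smul_eq_mul, mul_one, b.2]
      omega
    · rintro ⟨a, hpos, hsum⟩
      apply Subtype.ext
      funext j
      have := hpos j
      show a j - 1 + 1 = a j
      omega
    · rintro ⟨b, hb⟩
      apply Subtype.ext
      funext j
      show b j + 1 - 1 = b j
      omega
  rw [Nat.card_congr e1, Nat.card_congr (sumFinEquivSym k (n - k)).symm,
    Nat.card_eq_fintype_card, Sym.card_sym_eq_multichoose, Nat.multichoose_eq]
  rw [Fintype.card_fin]
  have h1 : k + (n - k) - 1 = n - 1 := by omega
  rw [h1]
  have h2 : n - k ≤ n - 1 := by omega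
  rw [← Nat.choose_symm h2]
  congr 1
  omega

/-! ### Putting it together -/

lemma card_T_sum (n k : ℕ) :
    Nat.card {p : Equiv.Perm (Fin n) × (Fin n → Fin k) //
        Function.Surjective p.2 ∧ ∀ x, p.2 (p.1 x) = p.2 x}
      = ∑ σ : Equiv.Perm (Fin n),
          Nat.card {f : Fin n → Fin k // Function.Surjective f ∧ ∀ x, f (σ x) = f x} := by
  classical
  rw [Nat.card_congr (Equiv.subtypeProdEquivSigmaSubtype
    (fun (σ : Equiv.Perm (Fin n)) (f : Fin n → Fin k) =>
      Function.Surjective f ∧ ∀ x, f (σ x) = f x))]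
  rw [Nat.card_eq_fintype_card, Fintype.card_sigma]
  exact Finset.sum_congr rfl fun σ _ => (Nat.card_eq_fintype_card).symm

lemma card_T_prod (n k : ℕ) :
    Nat.card {p : Equiv.Perm (Fin n) × (Fin n → Fin k) //
        Function.Surjective p.2 ∧ ∀ x, p.2 (p.1 x) = p.2 x}
      = Nat.factorial n * Nat.card (CompT n k) := by
  rw [Nat.card_congr (TsetEquiv n k), Nat.card_prod]
  congr 1
  rw [Nat.card_eq_fintype_card, Fintype.card_perm, Fintype.card_fin]

lemma stirlingSecond_eq_zero {m k : ℕ} (hmk : m < k) : stirlingSecond m k = 0 := by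
  classical
  have hempty : {P : Finset (Finset (Fin m)) | IsPartitionOf m P ∧ P.card = k} = ∅ := by
    ext P
    simp only [Set.mem_setOf_eq, Set.mem_empty_iff_false, iff_false]
    rintro ⟨⟨hne, hdis, hcov⟩, hcard⟩
    have h1 : P.card ≤ ∑ b ∈ P, b.card := by
      calc P.card = ∑ _b ∈ P, 1 := by rw [Finset.sum_const, smul_eq_mul, mul_one]
      _ ≤ ∑ b ∈ P, b.card := Finset.sum_le_sum fun b hb => Finset.card_pos.mpr (hne b hb)
    have h2 : ∑ b ∈ P, b.card = (P.biUnion id).card :=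
      (Finset.card_biUnion (fun b hb c hc hbc => hdis b hb c hc hbc)).symm
    have h3 : (P.biUnion id).card ≤ m := by
      calc (P.biUnion id).card ≤ (Finset.univ : Finset (Fin m)).card :=
            Finset.card_le_card (Finset.subset_univ _)
      _ = m := by rw [Finset.card_univ, Fintype.card_fin]
    omega
  rw [stirlingSecond, hempty, Set.ncard_empty]

lemma reindex_lemma {n k : ℕ} (hkn : k ≤ n) (G : ℕ → ℕ) (hzero : ∀ m, m < k → G m = 0) :
    ∑ j ∈ Finset.range (n - k + 1), G (n - j) = ∑ m ∈ Finset.range (n + 1), G m := by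
  have h1 : ∑ j ∈ Finset.range (n - k + 1), G (n - j)
      = ∑ i ∈ Finset.range (n - k + 1), G (k + i) := by
    conv_rhs => rw [← Finset.sum_range_reflect]
    refine Finset.sum_congr rfl fun j hj => ?_
    congr 1
    have := Finset.mem_range.mp hj
    omega
  rw [h1]
  have h2 : ∑ m ∈ Finset.range (n + 1), G m
      = ∑ i ∈ Finset.Ico 0 k, G i + ∑ i ∈ Finset.Ico k (n + 1), G i := by
    rw [Finset.range_eq_Ico, ← Finset.sum_Ico_consecutive _ (Nat.zero_le k)
      (by omega : k ≤ n + 1)]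
  have h3 : ∑ i ∈ Finset.Ico 0 k, G i = 0 :=
    Finset.sum_eq_zero fun i hi => hzero i (Finset.mem_Ico.mp hi).2
  have h4 : ∑ i ∈ Finset.Ico k (n + 1), G i = ∑ i ∈ Finset.range (n + 1 - k), G (k + i) :=
    Finset.sum_Ico_eq_sum_range G k (n + 1)
  rw [h2, h3, h4, zero_add]
  have h5 : n + 1 - k = n - k + 1 := by omega
  rw [h5]

end AuxStirling

/-- For `1 ≤ k ≤ n`, summing the joint `(nsb, nse)` distribution of
ordered partitions of `[n]` into `k` nonempty lists over all `0 ≤ i ≤ k-1` and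
`0 ≤ j ≤ n-k` yields the total count:
`∑_{j=0}^{n-k} ∑_{i=0}^{k-1} c(n,n-j) S(n-j,k) c(k,k-i) = n! C(n-1,k-1)`. -/
theorem sum_joint_distribution_eq_total (n k : ℕ) (hk : 1 ≤ k) (hkn : k ≤ n) :
    ∑ j ∈ Finset.range (n - k + 1), ∑ i ∈ Finset.range k,
        stirlingFirst n (n - j) * stirlingSecond (n - j) k * stirlingFirst k (k - i) =
      Nat.factorial n * Nat.choose (n - 1) (k - 1) := by
  classical
  have step1 : ∀ j, ∑ i ∈ Finset.range k,
      stirlingFirst n (n - j) * stirlingSecond (n - j) k * stirlingFirst k (k - i)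
      = stirlingFirst n (n - j) * (stirlingSecond (n - j) k * Nat.factorial k) := by
    intro j
    rw [← Finset.mul_sum, sum_stirlingFirst hk, mul_assoc]
  rw [Finset.sum_congr rfl (fun j _ => step1 j)]
  have hre : ∑ j ∈ Finset.range (n - k + 1),
        stirlingFirst n (n - j) * (stirlingSecond (n - j) k * Nat.factorial k)
      = ∑ m ∈ Finset.range (n + 1),
          stirlingFirst n m * (stirlingSecond m k * Nat.factorial k) :=
    reindex_lemma hkn (fun m => stirlingFirst n m * (stirlingSecond m k * Nat.factorial k))
      (fun m hm => by
        show stirlingFirst n m * (stirlingSecond m k * Nat.factorial k) = 0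
        rw [stirlingSecond_eq_zero hm, zero_mul, mul_zero])
  rw [hre]
  have hsurj : ∀ m, stirlingSecond m k * Nat.factorial k
      = Nat.card {f : Fin m → Fin k // Function.Surjective f} :=
    fun m => (surjCard_eq m k).symm
  rw [Finset.sum_congr rfl (fun m _ => by rw [hsurj m])]
  rw [sum_cycleCount (n := n)
    (g := fun m => Nat.card {f : Fin m → Fin k // Function.Surjective f})]
  rw [Finset.sum_congr rfl (fun σ _ => (compat_card σ).symm)]
  rw [← card_T_sum n k, card_T_prod n k, card_CompT hk hkn]
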